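/- Let R be a finite commutative Frobenius ring of characteristic 2 and let B and C be n×n matrices over R. Then the linear code of length 4n over R generated by the rows of the 2n×4n matrix (I_{2n} | X), where X is the 2×2 block matrix [[B, C],[C, B]], is self-dual if and only if (B+C)(B+C)^T = I_n and B C^T = C B^T. -/

import Mathlib

open Matrix

/-- The dual of a code (submodule of `ι → R`) with respect to the standard bilinear form. -/
def dualCode {R : Type*} [CommRing R] {ι : Type*} [Fintype ι]
    (C : Submodule R (ι → R)) : Submodule R (ι → R) where
  carrier := {x | ∀ c ∈ C, ∑ i, x i * c i = 0}
  add_mem' := by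
    intro a b ha hb c hc
    simp only [Set.mem_setOf_eq] at ha hb ⊢
    simp [Pi.add_apply, add_mul, Finset.sum_add_distrib, ha c hc, hb c hc]
  zero_mem' := by
    intro c hc
    simp
  smul_mem' := by
    intro r a ha c hc
    simp only [Set.mem_setOf_eq] at ha ⊢
    simp [Pi.smul_apply, smul_eq_mul, mul_assoc, ← Finset.mul_sum, ha c hc]

/-- A code is self-dual if it equals its dual. -/
def IsSelfDual {R : Type*} [CommRing R] {ι : Type*} [Fintype ι]
    (C : Submodule R (ι → R)) : Prop :=
  C = dualCode C

/-- The code generated by the rows of a matrix. -/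
def rowSpan {R : Type*} [CommRing R] {κ ι : Type*} (M : Matrix κ ι R) :
    Submodule R (ι → R) :=
  Submodule.span R (Set.range M)

lemma mem_rowSpan {R : Type*} [CommRing R] {κ ι : Type*} [Fintype κ]
    (M : Matrix κ ι R) (x : ι → R) :
    x ∈ rowSpan M ↔ ∃ w, w ᵥ* M = x := by
  rw [rowSpan, show Set.range M = Set.range M.row from rfl, ← range_vecMulLinear]
  simp [LinearMap.mem_range, Matrix.vecMulLinear_apply]

lemma mem_dualCode_rowSpan {R : Type*} [CommRing R] {κ ι : Type*} [Fintype κ] [DecidableEq κ] [Fintype ι]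
    [DecidableEq ι] (M : Matrix κ ι R) (x : ι → R) :
    x ∈ dualCode (rowSpan M) ↔ M *ᵥ x = 0 := by
  have key : ∀ w : κ → R, (∑ i, x i * (w ᵥ* M) i) = (M *ᵥ x) ⬝ᵥ w := by
    intro w
    rw [show (∑ i, x i * (w ᵥ* M) i) = x ⬝ᵥ (w ᵥ* M) from rfl,
      ← Matrix.mulVec_transpose, Matrix.dotProduct_mulVec, Matrix.vecMul_transpose]
  constructor
  · intro h
    funext j
    have := h (Pi.single j 1 ᵥ* M) ((mem_rowSpan M _).mpr ⟨_, rfl⟩)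
    rw [key] at this
    simpa [dotProduct_single] using this
  · intro h c hc
    obtain ⟨w, rfl⟩ := (mem_rowSpan M c).mp hc
    rw [key, h, zero_dotProduct]

lemma selfDual_iff_mul_transpose {R : Type*} [CommRing R] [CharP R 2] {k : Type*}
    [Fintype k] [DecidableEq k] (X : Matrix k k R) :
    IsSelfDual (rowSpan (Matrix.fromCols (1 : Matrix k k R) X)) ↔ X * Xᵀ = 1 := by
  have hmem : ∀ x : k ⊕ k → R,
      x ∈ rowSpan (Matrix.fromCols (1 : Matrix k k R) X) ↔
        ∃ w, Sum.elim w (w ᵥ* X) = x := by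
    intro x
    rw [mem_rowSpan]
    simp [Matrix.vecMul_fromCols, Matrix.vecMul_one]
  have hdual : ∀ x : k ⊕ k → R,
      x ∈ dualCode (rowSpan (Matrix.fromCols (1 : Matrix k k R) X)) ↔
        (x ∘ Sum.inl) + X *ᵥ (x ∘ Sum.inr) = 0 := by
    intro x
    rw [mem_dualCode_rowSpan]
    have hx : x = Sum.elim (x ∘ Sum.inl) (x ∘ Sum.inr) := by funext i; cases i <;> rfl
    rw [show Matrix.fromCols (1 : Matrix k k R) X *ᵥ x
        = x ∘ Sum.inl + X *ᵥ (x ∘ Sum.inr) by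
      conv_lhs => rw [hx]
      rw [Matrix.fromCols_mulVec_sumElim, Matrix.one_mulVec]]
  constructor
  · intro h
    have key : ∀ w : k → R, w + (X * Xᵀ) *ᵥ w = 0 := by
      intro w
      have h1 := (hmem _).mpr ⟨w, rfl⟩
      rw [h, hdual] at h1
      simpa [← Matrix.mulVec_transpose, Matrix.mulVec_mulVec] using h1
    ext i j
    have h2 : (Pi.single j 1 : k → R) i + (X * Xᵀ) i j = 0 := by
      have := congrFun (key (Pi.single j 1)) i
      rw [Pi.add_apply, Pi.zero_apply] at this
      rwa [congrFun (Matrix.mulVec_single_one _ _) i, Matrix.col_apply] at this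
    have h4 : (X * Xᵀ) i j = -((Pi.single j 1 : k → R) i) := eq_neg_of_add_eq_zero_right h2
    rw [h4, CharTwo.neg_eq]
    simp [Pi.single_apply, Matrix.one_apply, eq_comm]
  · intro hX
    have hX' : Xᵀ * X = 1 := mul_eq_one_comm.mp hX
    refine Submodule.ext fun x => ?_
    rw [hmem, hdual]
    constructor
    · rintro ⟨w, rfl⟩
      funext i
      simp [← Matrix.mulVec_transpose, Matrix.mulVec_mulVec, hX, Matrix.one_mulVec,
        CharTwo.add_self_eq_zero]
    · intro h2
      refine ⟨x ∘ Sum.inl, ?_⟩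
      have h3 : x ∘ Sum.inl = X *ᵥ (x ∘ Sum.inr) := by
        have := eq_neg_of_add_eq_zero_left h2
        rw [this]; funext i; exact CharTwo.neg_eq _
      funext i
      cases i with
      | inl i => rfl
      | inr i =>
        have : (x ∘ Sum.inl) ᵥ* X = x ∘ Sum.inr := by
          rw [h3, ← Matrix.mulVec_transpose, Matrix.mulVec_mulVec, hX', Matrix.one_mulVec]
        exact congrFun this i

/-- Lemma 2.1: over a finite commutative Frobenius ring of characteristic 2, the code
generated by `(I | [[B,C],[C,B]])` is self-dual iff `(B+C)(B+C)ᵀ = I` and `BCᵀ = CBᵀ`. -/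
theorem selfDual_of_two_block_circulant
    {R : Type*} [CommRing R] [Fintype R] [CharP R 2]
    (hFrob : Module.Injective R R)
    {n : ℕ} (B C : Matrix (Fin n) (Fin n) R) :
    IsSelfDual (rowSpan (Matrix.fromCols (1 : Matrix (Fin n ⊕ Fin n) (Fin n ⊕ Fin n) R) (Matrix.fromBlocks B C C B))) ↔
      ((B + C) * (B + C)ᵀ = 1 ∧ B * Cᵀ = C * Bᵀ) := by
  rw [selfDual_iff_mul_transpose]
  have hadd : ∀ A : Matrix (Fin n) (Fin n) R, A + A = 0 := fun A => by
    ext i j; exact CharTwo.add_self_eq_zero _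
  have hneg : ∀ A : Matrix (Fin n) (Fin n) R, -A = A := fun A => by
    ext i j; exact CharTwo.neg_eq _
  have expand : (B + C) * (B + C)ᵀ = B * Bᵀ + C * Cᵀ + (B * Cᵀ + C * Bᵀ) := by
    rw [Matrix.transpose_add]; noncomm_ring
  rw [Matrix.fromBlocks_transpose, Matrix.fromBlocks_multiply, ← Matrix.fromBlocks_one,
    Matrix.fromBlocks_inj]
  constructor
  · rintro ⟨h1, h2, h3, h4⟩
    refine ⟨by rw [expand, h1, h2, add_zero], ?_⟩
    rw [← hneg (C * Bᵀ)]
    exact eq_neg_of_add_eq_zero_left h2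
  · rintro ⟨h1, h2⟩
    have e0 : B * Cᵀ + C * Bᵀ = 0 := by rw [h2]; exact hadd _
    have e1 : B * Bᵀ + C * Cᵀ = 1 := by rw [expand, e0, add_zero] at h1; exact h1
    exact ⟨e1, e0, by rw [add_comm]; exact e0, by rw [add_comm]; exact e1⟩
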